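/- Let ε > 0 and p ≥ 1. On ℝ², define the probability measures μ^ε = (1/2)δ_{(ε, 1)} + (1/2)δ_{(−ε, −1)} and μ = (1/2)δ_{(0, 1)} + (1/2)δ_{(0, −1)}. Then: (a) the only bicausal coupling between μ and μ^ε is the product coupling μ ⊗ μ^ε; and (b) consequently the adapted Wasserstein distance satisfies AW_p^p(μ^ε, μ) = inf over bicausal couplings π of ∫ (|x₁ − y₁|^p + |x₂ − y₂|^p) dπ = ε^p + 2^{p−1}. In particular AW_p^p(μ^ε, μ) > 2^{p−1} for every ε > 0, even though the (non-adapted) p-Wasserstein distance between μ^ε and μ tends to 0 as ε → 0. -/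

import Mathlib

open MeasureTheory
open scoped ENNReal

noncomputable section

/-- Conditional independence of the σ-algebras `m₁` and `m₂` given `m'`, under `π`:
the conditional expectation of the product of indicators factorizes. -/
def CondIndepGiven {X : Type*} [mX : MeasurableSpace X] (m' m₁ m₂ : MeasurableSpace X)
    (π : @MeasureTheory.Measure X mX) : Prop :=
  ∀ s t : Set X, MeasurableSet[m₁] s → MeasurableSet[m₂] t →
    MeasureTheory.condExp m' π ((s ∩ t).indicator fun _ => (1 : ℝ)) =ᵐ[π]
      fun ω => MeasureTheory.condExp m' π (s.indicator fun _ => (1 : ℝ)) ω *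
        MeasureTheory.condExp m' π (t.indicator fun _ => (1 : ℝ)) ω

/-- A coupling `π` on `(ℝ×ℝ) × (ℝ×ℝ)` (two two-step processes) is bicausal: given
`σ(x₁)`, `σ(y₁)` is conditionally independent of `σ(x₁,x₂)`, and symmetrically with the
roles of `x` and `y` exchanged. -/
def IsBicausal2 (π : Measure ((ℝ × ℝ) × (ℝ × ℝ))) : Prop :=
  CondIndepGiven (X := (ℝ × ℝ) × (ℝ × ℝ)) (MeasurableSpace.comap (fun q => q.1.1) inferInstance)
    (MeasurableSpace.comap (fun q => q.2.1) inferInstance)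
    (MeasurableSpace.comap Prod.fst inferInstance) π ∧
  CondIndepGiven (X := (ℝ × ℝ) × (ℝ × ℝ)) (MeasurableSpace.comap (fun q => q.2.1) inferInstance)
    (MeasurableSpace.comap (fun q => q.1.1) inferInstance)
    (MeasurableSpace.comap Prod.snd inferInstance) π

/-- The martingale `μ = (1/2)δ_{(0,1)} + (1/2)δ_{(0,-1)}`. -/
def muMart : Measure (ℝ × ℝ) :=
  (1 / 2 : ℝ≥0∞) • Measure.dirac (0, 1) + (1 / 2 : ℝ≥0∞) • Measure.dirac (0, -1)

/-- The deterministic process `μ^ε = (1/2)δ_{(ε,1)} + (1/2)δ_{(-ε,-1)}`. -/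
def muEps (ε : ℝ) : Measure (ℝ × ℝ) :=
  (1 / 2 : ℝ≥0∞) • Measure.dirac (ε, 1) + (1 / 2 : ℝ≥0∞) • Measure.dirac (-ε, -1)

/-! ### Auxiliary lemmas -/

lemma condexp_trivial {X : Type*} (m' : MeasurableSpace X) [mX : MeasurableSpace X]
    {π : Measure X} [IsProbabilityMeasure π] (hm : m' ≤ mX)
    (htriv : ∀ s, MeasurableSet[m'] s → π s = 0 ∨ π s = 1)
    {f : X → ℝ} (hf : Integrable f π) :
    condExp m' π f =ᵐ[π] fun _ => ∫ x, f x ∂π := by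
  haveI : SigmaFinite (π.trim hm) := inferInstance
  refine (ae_eq_condExp_of_forall_setIntegral_eq (μ := π) hm hf ?hint ?heq ?hmeas).symm
  case hint => exact fun s _ _ => (integrable_const _).integrableOn
  case hmeas =>
    exact StronglyMeasurable.aestronglyMeasurable
      (@stronglyMeasurable_const _ _ m' _ _)
  case heq =>
    intro s hs _
    rcases htriv s hs with h0 | h1
    · rw [setIntegral_measure_zero _ h0, setIntegral_measure_zero _ h0]
    · have hcs : π sᶜ = 0 := by
        rw [measure_compl (hm s hs) (measure_ne_top π s), h1, measure_univ, tsub_self]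
      have hadd := integral_add_compl (hm s hs) hf
      rw [setIntegral_measure_zero _ hcs, add_zero] at hadd
      rw [setIntegral_const, measureReal_def, h1, hadd]
      simp

section CI
variable {X : Type*} (m' m₁ m₂ : MeasurableSpace X) [mX : MeasurableSpace X]
  {π : Measure X} [IsProbabilityMeasure π]

lemma indep_of_condIndep (hm : m' ≤ mX) (h1 : m₁ ≤ mX) (h2 : m₂ ≤ mX)
    (htriv : ∀ s, MeasurableSet[m'] s → π s = 0 ∨ π s = 1)
    (hci : CondIndepGiven m' m₁ m₂ π) {s t : Set X} (hs : MeasurableSet[m₁] s)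
    (ht : MeasurableSet[m₂] t) : π (s ∩ t) = π s * π t := by
  have hsm : MeasurableSet[mX] s := h1 s hs
  have htm : MeasurableSet[mX] t := h2 t ht
  have e1 := condexp_trivial m' hm htriv
    ((integrable_const (1:ℝ)).indicator (hsm.inter htm))
  have es := condexp_trivial m' hm htriv ((integrable_const (1:ℝ)).indicator hsm)
  have et := condexp_trivial m' hm htriv ((integrable_const (1:ℝ)).indicator htm)
  have key : (fun _ : X => ∫ x, (s ∩ t).indicator (fun _ => (1:ℝ)) x ∂π) =ᵐ[π]
      (fun _ : X => (∫ x, s.indicator (fun _ => (1:ℝ)) x ∂π) *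
        (∫ x, t.indicator (fun _ => (1:ℝ)) x ∂π)) :=
    e1.symm.trans ((hci s t hs ht).trans (es.mul et))
  haveI : (Filter.NeBot (ae π)) := ae_neBot.2 (IsProbabilityMeasure.ne_zero π)
  obtain ⟨x, hx⟩ := key.exists
  have h1' : ∫ x, (s ∩ t).indicator (fun _ => (1:ℝ)) x ∂π = (π (s ∩ t)).toReal := by
    exact (integral_indicator_one (hsm.inter htm)).trans (measureReal_def _ _)
  have h2' : ∫ x, s.indicator (fun _ => (1:ℝ)) x ∂π = (π s).toReal := by
    exact (integral_indicator_one hsm).trans (measureReal_def _ _)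
  have h3' : ∫ x, t.indicator (fun _ => (1:ℝ)) x ∂π = (π t).toReal := by
    exact (integral_indicator_one htm).trans (measureReal_def _ _)
  rw [h1', h2', h3'] at hx
  simp only at hx
  refine (ENNReal.toReal_eq_toReal_iff' (measure_ne_top π _)
    (ENNReal.mul_ne_top (measure_ne_top π s) (measure_ne_top π t))).mp ?_
  rw [ENNReal.toReal_mul]
  exact hx

lemma condIndep_of_indep_trivial (hm : m' ≤ mX) (h1 : m₁ ≤ mX) (h2 : m₂ ≤ mX)
    (htriv : ∀ s, MeasurableSet[m'] s → π s = 0 ∨ π s = 1)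
    (hind : ∀ s t : Set X, MeasurableSet[m₁] s → MeasurableSet[m₂] t →
      π (s ∩ t) = π s * π t) :
    CondIndepGiven m' m₁ m₂ π := by
  intro s t hs ht
  have hsm : MeasurableSet[mX] s := h1 s hs
  have htm : MeasurableSet[mX] t := h2 t ht
  have e1 := condexp_trivial m' hm htriv
    ((integrable_const (1:ℝ)).indicator (hsm.inter htm))
  have es := condexp_trivial m' hm htriv ((integrable_const (1:ℝ)).indicator hsm)
  have et := condexp_trivial m' hm htriv ((integrable_const (1:ℝ)).indicator htm)
  refine e1.trans (Filter.EventuallyEq.trans ?_ (es.mul et).symm)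
  refine Filter.EventuallyEq.of_eq (funext fun _ => ?_)
  have h1' : ∫ x, (s ∩ t).indicator (fun _ => (1:ℝ)) x ∂π = (π (s ∩ t)).toReal := by
    exact (integral_indicator_one (hsm.inter htm)).trans (measureReal_def _ _)
  have h2' : ∫ x, s.indicator (fun _ => (1:ℝ)) x ∂π = (π s).toReal := by
    exact (integral_indicator_one hsm).trans (measureReal_def _ _)
  have h3' : ∫ x, t.indicator (fun _ => (1:ℝ)) x ∂π = (π t).toReal := by
    exact (integral_indicator_one htm).trans (measureReal_def _ _)
  rw [h1', h2', h3', hind s t hs ht, ENNReal.toReal_mul]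
  rfl

lemma condIndep_of_m₁_trivial (hm : m' ≤ mX) (h1 : m₁ ≤ mX)
    (htriv : ∀ s, MeasurableSet[m₁] s → π s = 0 ∨ π s = 1) :
    CondIndepGiven m' m₁ m₂ π := by
  intro s t hs ht
  have hsm : MeasurableSet[mX] s := h1 s hs
  rcases htriv s hs with h0 | hone
  · have hse : s =ᵐ[π] (∅ : Set X) := ae_eq_empty.2 h0
    have hste : (s ∩ t : Set X) =ᵐ[π] (∅ : Set X) :=
      ae_eq_empty.2 (measure_mono_null Set.inter_subset_left h0)
    have c1 : condExp m' π ((s ∩ t).indicator fun _ => (1:ℝ)) =ᵐ[π] 0 := by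
      refine (condExp_congr_ae ((indicator_ae_eq_of_ae_eq_set hste).trans ?_)).trans
        (by rw [condExp_zero])
      exact Filter.EventuallyEq.of_eq (funext fun x => by simp)
    have cs : condExp m' π (s.indicator fun _ => (1:ℝ)) =ᵐ[π] 0 := by
      refine (condExp_congr_ae ((indicator_ae_eq_of_ae_eq_set hse).trans ?_)).trans
        (by rw [condExp_zero])
      exact Filter.EventuallyEq.of_eq (funext fun x => by simp)
    filter_upwards [c1, cs] with ω hω1 hωs
    rw [hω1, hωs]
    simp
  · have hse : s =ᵐ[π] (Set.univ : Set X) := by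
      rw [ae_eq_univ]
      rw [measure_compl hsm (measure_ne_top π s), hone, measure_univ, tsub_self]
    have hste : (s ∩ t : Set X) =ᵐ[π] t := by
      have h' : (Set.univ ∩ t : Set X) = t := Set.univ_inter t
      exact (Filter.EventuallyEq.inter hse (Filter.EventuallyEq.refl _ _)).trans (by rw [h']; exact Filter.EventuallyEq.rfl)
    have c1 : condExp m' π ((s ∩ t).indicator fun _ => (1:ℝ)) =ᵐ[π]
        condExp m' π (t.indicator fun _ => (1:ℝ)) :=
      condExp_congr_ae (indicator_ae_eq_of_ae_eq_set hste)
    have cs : condExp m' π (s.indicator fun _ => (1:ℝ)) =ᵐ[π] fun _ => (1:ℝ) := by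
      refine (condExp_congr_ae ((indicator_ae_eq_of_ae_eq_set hse).trans ?_)).trans
        (Filter.EventuallyEq.of_eq (condExp_const hm (1:ℝ)))
      exact Filter.EventuallyEq.of_eq (funext fun x => by simp)
    filter_upwards [c1, cs] with ω hω1 hωs
    rw [hω1, hωs, one_mul]

end CI

/-! ### the measures -/

instance : IsProbabilityMeasure muMart := by
  constructor
  simp [muMart]
  exact ENNReal.inv_two_add_inv_two

instance (ε : ℝ) : IsProbabilityMeasure (muEps ε) := by
  constructor
  simp [muEps]
  exact ENNReal.inv_two_add_inv_two

lemma integrable_smul_dirac {α : Type*} [MeasurableSpace α] [MeasurableSingletonClass α]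
    (c : ℝ≥0∞) (hc : c ≠ ∞) (a : α) {f : α → ℝ} (hf : StronglyMeasurable f) :
    Integrable f (c • Measure.dirac a) := by
  refine ⟨hf.aestronglyMeasurable, ?_⟩
  rw [hasFiniteIntegral_def, lintegral_smul_measure, lintegral_dirac]
  exact ENNReal.mul_lt_top hc.lt_top ENNReal.coe_lt_top

lemma integral_smul_dirac {α : Type*} [MeasurableSpace α] [MeasurableSingletonClass α]
    (c : ℝ≥0∞) (a : α) (f : α → ℝ) :
    ∫ x, f x ∂(c • Measure.dirac a) = c.toReal * f a := by
  rw [integral_smul_measure, integral_dirac, smul_eq_mul]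

lemma integral_two_atoms {α : Type*} [MeasurableSpace α] [MeasurableSingletonClass α]
    (a b : α) {f : α → ℝ} (hf : StronglyMeasurable f) :
    ∫ x, f x ∂((1/2 : ℝ≥0∞) • Measure.dirac a + (1/2 : ℝ≥0∞) • Measure.dirac b)
      = (f a + f b) / 2 := by
  rw [integral_add_measure (integrable_smul_dirac _ (by norm_num) a hf)
    (integrable_smul_dirac _ (by norm_num) b hf),
    integral_smul_dirac, integral_smul_dirac]
  rw [ENNReal.toReal_div]
  simp
  ring

instance isFiniteMeasure_half_dirac {α : Type*} [MeasurableSpace α] (x : α) :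
    IsFiniteMeasure ((1/2 : ℝ≥0∞) • Measure.dirac x) := ⟨by
  rw [Measure.smul_apply, smul_eq_mul]
  exact ENNReal.mul_lt_top (by norm_num) (measure_lt_top _ _)⟩

lemma smul_prod' {α β : Type*} [MeasurableSpace α] [MeasurableSpace β]
    (c : ℝ≥0∞) (hc : c ≠ ∞) (μ : Measure α) (ν : Measure β)
    [IsFiniteMeasure μ] [IsFiniteMeasure ν] :
    (c • μ).prod ν = c • (μ.prod ν) := by
  haveI : IsFiniteMeasure (c • μ) := ⟨by
    rw [Measure.smul_apply, smul_eq_mul]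
    exact ENNReal.mul_lt_top hc.lt_top (measure_lt_top μ _)⟩
  refine Measure.prod_eq fun s t hs ht => ?_
  simp [Measure.prod_prod, mul_assoc]

lemma prod_smul' {α β : Type*} [MeasurableSpace α] [MeasurableSpace β]
    (c : ℝ≥0∞) (hc : c ≠ ∞) (μ : Measure α) (ν : Measure β)
    [IsFiniteMeasure μ] [IsFiniteMeasure ν] :
    μ.prod (c • ν) = c • (μ.prod ν) := by
  haveI : IsFiniteMeasure (c • ν) := ⟨by
    rw [Measure.smul_apply, smul_eq_mul]
    exact ENNReal.mul_lt_top hc.lt_top (measure_lt_top ν _)⟩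
  refine Measure.prod_eq fun s t hs ht => ?_
  simp [Measure.prod_prod]
  ring

lemma dirac_prod_two (a : ℝ × ℝ) (e f : ℝ × ℝ) :
    (Measure.dirac a).prod ((1/2 : ℝ≥0∞) • Measure.dirac e + (1/2 : ℝ≥0∞) • Measure.dirac f)
      = (1/2 : ℝ≥0∞) • Measure.dirac (a, e) + (1/2 : ℝ≥0∞) • Measure.dirac (a, f) := by
  rw [Measure.prod_add, prod_smul' _ (by norm_num), prod_smul' _ (by norm_num),
    Measure.dirac_prod_dirac, Measure.dirac_prod_dirac]

lemma prod_four (ε : ℝ) :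
    muMart.prod (muEps ε)
      = (1/2 : ℝ≥0∞) • ((1/2 : ℝ≥0∞) • Measure.dirac (((0:ℝ),(1:ℝ)), ((ε:ℝ),(1:ℝ)))
          + (1/2 : ℝ≥0∞) • Measure.dirac (((0:ℝ),(1:ℝ)), (-ε,(-1:ℝ))))
        + (1/2 : ℝ≥0∞) • ((1/2 : ℝ≥0∞) • Measure.dirac (((0:ℝ),(-1:ℝ)), (ε,(1:ℝ)))
          + (1/2 : ℝ≥0∞) • Measure.dirac (((0:ℝ),(-1:ℝ)), (-ε,(-1:ℝ)))) := by
  haveI : SFinite (muEps ε) := inferInstance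
  rw [muMart, Measure.add_prod, smul_prod' _ (by norm_num) _ (muEps ε),
    smul_prod' _ (by norm_num) _ (muEps ε), muEps, dirac_prod_two, dirac_prod_two]

lemma triv_first {π : Measure ((ℝ × ℝ) × (ℝ × ℝ))} (hfst : π.map Prod.fst = muMart) :
    ∀ s, MeasurableSet[MeasurableSpace.comap (fun q : (ℝ × ℝ) × (ℝ × ℝ) => q.1.1)
      inferInstance] s → π s = 0 ∨ π s = 1 := by
  rintro s ⟨A, hA, rfl⟩
  have key : π ((fun q : (ℝ × ℝ) × (ℝ × ℝ) => q.1.1) ⁻¹' A)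
      = muMart (Prod.fst ⁻¹' A) := by
    rw [← hfst, Measure.map_apply measurable_fst (measurable_fst hA)]
    rfl
  rw [key]
  by_cases h0 : (0:ℝ) ∈ A
  · right
    simp [muMart, Measure.dirac_apply, Set.indicator, h0]
    exact ENNReal.inv_two_add_inv_two
  · left
    simp [muMart, Measure.dirac_apply, Set.indicator, h0]

/-! ### main specific lemmas -/

section Main

lemma cost_measurable (p : ℝ) (hp : 1 ≤ p) :
    Continuous (fun q : (ℝ × ℝ) × (ℝ × ℝ) => |q.1.1 - q.2.1| ^ p + |q.1.2 - q.2.2| ^ p) := by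
  have h0p : (0:ℝ) ≤ p := by linarith
  exact ((Real.continuous_rpow_const h0p).comp
      (continuous_fst.fst.sub continuous_snd.fst).abs).add
    ((Real.continuous_rpow_const h0p).comp (continuous_fst.snd.sub continuous_snd.snd).abs)

lemma prod_marginals (ε : ℝ) :
    (muMart.prod (muEps ε)).map Prod.fst = muMart ∧
    (muMart.prod (muEps ε)).map Prod.snd = muEps ε := by
  constructor
  · rw [Measure.map_fst_prod]
    simp
  · rw [Measure.map_snd_prod]
    simp

lemma prod_isBicausal (ε : ℝ) : IsBicausal2 (muMart.prod (muEps ε)) := by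
  set π := muMart.prod (muEps ε) with hπ
  haveI : IsProbabilityMeasure π := by infer_instance
  have hfst : π.map Prod.fst = muMart := (prod_marginals ε).1
  have htriv := triv_first hfst
  have hm1 : MeasurableSpace.comap (fun q : (ℝ × ℝ) × (ℝ × ℝ) => q.1.1) inferInstance ≤
      (inferInstance : MeasurableSpace ((ℝ × ℝ) × (ℝ × ℝ))) :=
    (measurable_fst.fst).comap_le
  have hm2 : MeasurableSpace.comap (fun q : (ℝ × ℝ) × (ℝ × ℝ) => q.2.1) inferInstance ≤
      (inferInstance : MeasurableSpace ((ℝ × ℝ) × (ℝ × ℝ))) :=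
    (measurable_snd.fst).comap_le
  have hmf : MeasurableSpace.comap (Prod.fst : (ℝ × ℝ) × (ℝ × ℝ) → ℝ × ℝ) inferInstance ≤
      (inferInstance : MeasurableSpace ((ℝ × ℝ) × (ℝ × ℝ))) :=
    measurable_fst.comap_le
  constructor
  · refine condIndep_of_indep_trivial _ _ _ hm1 hm2 hmf htriv ?_
    rintro s t ⟨A, hA, rfl⟩ ⟨C, hC, rfl⟩
    have hinter : ((fun q : (ℝ × ℝ) × (ℝ × ℝ) => q.2.1) ⁻¹' A) ∩ (Prod.fst ⁻¹' C)
        = C ×ˢ (Prod.fst ⁻¹' A) := by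
      ext q
      simp [Set.mem_prod, and_comm]
    have hs' : ((fun q : (ℝ × ℝ) × (ℝ × ℝ) => q.2.1) ⁻¹' A)
        = (Set.univ : Set (ℝ × ℝ)) ×ˢ (Prod.fst ⁻¹' A) := by
      ext q
      simp
    have ht' : (Prod.fst ⁻¹' C : Set ((ℝ × ℝ) × (ℝ × ℝ))) = C ×ˢ (Set.univ : Set (ℝ × ℝ)) := by
      ext q
      simp
    rw [hinter, hs', ht', hπ, Measure.prod_prod, Measure.prod_prod, Measure.prod_prod,
      measure_univ, one_mul, measure_univ, mul_one]
    ring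
  · exact condIndep_of_m₁_trivial _ _ _ hm2 hm1 htriv

lemma part_a (ε : ℝ) (hε : 0 < ε) (π : Measure ((ℝ × ℝ) × (ℝ × ℝ)))
    [IsProbabilityMeasure π]
    (hfst : π.map Prod.fst = muMart) (hsnd : π.map Prod.snd = muEps ε)
    (hbc : IsBicausal2 π) : π = muMart.prod (muEps ε) := by
  have hm1 : MeasurableSpace.comap (fun q : (ℝ × ℝ) × (ℝ × ℝ) => q.1.1) inferInstance ≤
      (inferInstance : MeasurableSpace ((ℝ × ℝ) × (ℝ × ℝ))) :=
    (measurable_fst.fst).comap_le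
  have hm2 : MeasurableSpace.comap (fun q : (ℝ × ℝ) × (ℝ × ℝ) => q.2.1) inferInstance ≤
      (inferInstance : MeasurableSpace ((ℝ × ℝ) × (ℝ × ℝ))) :=
    (measurable_snd.fst).comap_le
  have hmf : MeasurableSpace.comap (Prod.fst : (ℝ × ℝ) × (ℝ × ℝ) → ℝ × ℝ) inferInstance ≤
      (inferInstance : MeasurableSpace ((ℝ × ℝ) × (ℝ × ℝ))) :=
    measurable_fst.comap_le
  have htriv := triv_first hfst
  -- independence of σ(y₁) and σ(x)
  have hind : ∀ (A : Set ℝ) (C : Set (ℝ × ℝ)), MeasurableSet A → MeasurableSet C →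
      π (((fun q : (ℝ × ℝ) × (ℝ × ℝ) => q.2.1) ⁻¹' A) ∩ (Prod.fst ⁻¹' C))
        = π ((fun q : (ℝ × ℝ) × (ℝ × ℝ) => q.2.1) ⁻¹' A) * π (Prod.fst ⁻¹' C) := by
    intro A C hA hC
    exact indep_of_condIndep _ _ _ hm1 hm2 hmf htriv hbc.1 ⟨A, hA, rfl⟩ ⟨C, hC, rfl⟩
  -- support of the second marginal
  set S : Set (ℝ × ℝ) := {((ε:ℝ), (1:ℝ)), (-ε, (-1:ℝ))} with hS
  have hSm : MeasurableSet S := (measurableSet_singleton _).union (measurableSet_singleton _)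
  have hmuS : muEps ε Sᶜ = 0 := by
    have h1 : ((ε:ℝ), (1:ℝ)) ∈ S := by simp [hS]
    have h2 : ((-ε:ℝ), (-1:ℝ)) ∈ S := by simp [hS]
    simp [muEps, Measure.dirac_apply, Set.indicator, h1, h2]
  have hnull : π (Prod.snd ⁻¹' Sᶜ) = 0 := by
    rw [← Measure.map_apply measurable_snd hSm.compl, hsnd]
    exact hmuS
  -- the deterministic map reconstructing y from y₁ on the support
  set g : ℝ → ℝ × ℝ := fun a => (a, if 0 < a then (1:ℝ) else -1) with hgdef
  have hgm : Measurable g :=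
    measurable_id.prodMk (Measurable.ite measurableSet_Ioi measurable_const measurable_const)
  refine (Measure.prod_eq fun C B hC hB => ?_).symm
  set A := g ⁻¹' B with hAdef
  have hAm : MeasurableSet A := hgm hB
  have hae : (Prod.snd ⁻¹' B : Set ((ℝ × ℝ) × (ℝ × ℝ))) =ᵐ[π]
      ((fun q : (ℝ × ℝ) × (ℝ × ℝ) => q.2.1) ⁻¹' A) := by
    have hS' : ∀ᵐ q ∂π, q.2 ∈ S := by
      have h := measure_eq_zero_iff_ae_notMem.mp hnull
      filter_upwards [h] with q hq
      simpa using hq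
    rw [Filter.eventuallyEq_set]
    filter_upwards [hS'] with q hq
    have : q.2 = ((ε:ℝ), (1:ℝ)) ∨ q.2 = (-ε, (-1:ℝ)) := by
      simpa [hS] using hq
    rcases this with h | h
    · have hq1 : q.2.1 = ε := by rw [h]
      have hgε : g ε = ((ε:ℝ), (1:ℝ)) := by
        simp [hgdef, if_pos hε]
      simp only [Set.mem_preimage, hAdef, hq1, h, hgε]
    · have hq1 : q.2.1 = -ε := by rw [h]
      have hgε : g (-ε) = ((-ε:ℝ), (-1:ℝ)) := by
        have h1 : ¬ (0:ℝ) < -ε := by linarith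
        have h2 : ¬ ε < 0 := by linarith
        simp [hgdef, h1, h2]
      simp only [Set.mem_preimage, hAdef, hq1, h, hgε]
  have hprodset : (C ×ˢ B : Set ((ℝ × ℝ) × (ℝ × ℝ)))
      = Prod.fst ⁻¹' C ∩ Prod.snd ⁻¹' B := Set.prod_eq C B
  have heq1 : π (C ×ˢ B)
      = π (((fun q : (ℝ × ℝ) × (ℝ × ℝ) => q.2.1) ⁻¹' A) ∩ (Prod.fst ⁻¹' C)) := by
    rw [hprodset, Set.inter_comm]
    exact measure_congr (Filter.EventuallyEq.inter hae (Filter.EventuallyEq.refl _ _))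
  have heq2 : π ((fun q : (ℝ × ℝ) × (ℝ × ℝ) => q.2.1) ⁻¹' A) = muEps ε B := by
    rw [← measure_congr hae, ← Measure.map_apply measurable_snd hB, hsnd]
  have heq3 : π (Prod.fst ⁻¹' C : Set ((ℝ × ℝ) × (ℝ × ℝ))) = muMart C := by
    rw [← Measure.map_apply measurable_fst hC, hfst]
  rw [heq1, hind A C hAm hC, heq2, heq3, mul_comm]

end Main

section Values

lemma cost_prod_value (ε p : ℝ) (hε : 0 < ε) (hp : 1 ≤ p) :
    ∫ q : (ℝ × ℝ) × (ℝ × ℝ), (|q.1.1 - q.2.1| ^ p + |q.1.2 - q.2.2| ^ p)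
      ∂(muMart.prod (muEps ε)) = ε ^ p + 2 ^ (p - 1) := by
  have hsm := (cost_measurable p hp).stronglyMeasurable
  rw [prod_four ε]
  have hint1 : Integrable (fun q : (ℝ × ℝ) × (ℝ × ℝ) =>
      |q.1.1 - q.2.1| ^ p + |q.1.2 - q.2.2| ^ p)
      ((1/2 : ℝ≥0∞) • Measure.dirac (((0:ℝ),(1:ℝ)), ((ε:ℝ),(1:ℝ)))
        + (1/2 : ℝ≥0∞) • Measure.dirac (((0:ℝ),(1:ℝ)), (-ε,(-1:ℝ)))) :=
    (integrable_smul_dirac _ (by norm_num) _ hsm).add_measure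
      (integrable_smul_dirac _ (by norm_num) _ hsm)
  have hint2 : Integrable (fun q : (ℝ × ℝ) × (ℝ × ℝ) =>
      |q.1.1 - q.2.1| ^ p + |q.1.2 - q.2.2| ^ p)
      ((1/2 : ℝ≥0∞) • Measure.dirac (((0:ℝ),(-1:ℝ)), ((ε:ℝ),(1:ℝ)))
        + (1/2 : ℝ≥0∞) • Measure.dirac (((0:ℝ),(-1:ℝ)), (-ε,(-1:ℝ)))) :=
    (integrable_smul_dirac _ (by norm_num) _ hsm).add_measure
      (integrable_smul_dirac _ (by norm_num) _ hsm)
  rw [integral_add_measure (hint1.smul_measure (by norm_num))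
      (hint2.smul_measure (by norm_num)),
    integral_smul_measure, integral_smul_measure,
    integral_two_atoms _ _ hsm, integral_two_atoms _ _ hsm]
  have habs1 : |(0:ℝ) - ε| = ε := by rw [zero_sub, abs_neg, abs_of_pos hε]
  have habs2 : |(0:ℝ) - -ε| = ε := by rw [sub_neg_eq_add, zero_add, abs_of_pos hε]
  have hz : |(1:ℝ) - 1| ^ p = 0 := by
    rw [sub_self, abs_zero, Real.zero_rpow (by linarith)]
  have hz2 : |(-1:ℝ) - -1| ^ p = 0 := by
    rw [sub_self, abs_zero, Real.zero_rpow (by linarith)]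
  have h2a : |(1:ℝ) - -1| = 2 := by norm_num
  have h2b : |(-1:ℝ) - 1| = 2 := by norm_num
  have hhalf : (2:ℝ) ^ (p-1) = 2 ^ p / 2 := by
    rw [Real.rpow_sub (by norm_num), Real.rpow_one]
  simp only [habs1, habs2, hz, hz2, h2a, h2b, hhalf]
  rw [ENNReal.toReal_div]
  simp
  ring

lemma cost_pi0_value (ε p : ℝ) (hε : 0 < ε) (hp : 1 ≤ p) :
    ∫ q : (ℝ × ℝ) × (ℝ × ℝ), (|q.1.1 - q.2.1| ^ p + |q.1.2 - q.2.2| ^ p)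
      ∂((1/2 : ℝ≥0∞) • Measure.dirac (((0:ℝ),(1:ℝ)), ((ε:ℝ),(1:ℝ)))
        + (1/2 : ℝ≥0∞) • Measure.dirac (((0:ℝ),(-1:ℝ)), (-ε,(-1:ℝ)))) = ε ^ p := by
  have hsm := (cost_measurable p hp).stronglyMeasurable
  rw [integral_two_atoms _ _ hsm]
  have habs1 : |(0:ℝ) - ε| = ε := by rw [zero_sub, abs_neg, abs_of_pos hε]
  have habs2 : |(0:ℝ) - -ε| = ε := by rw [sub_neg_eq_add, zero_add, abs_of_pos hε]
  have hz : |(1:ℝ) - 1| ^ p = 0 := by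
    rw [sub_self, abs_zero, Real.zero_rpow (by linarith)]
  have hz2 : |(-1:ℝ) - -1| ^ p = 0 := by
    rw [sub_self, abs_zero, Real.zero_rpow (by linarith)]
  simp only [habs1, habs2, hz, hz2]
  ring

lemma pi0_prob (ε : ℝ) : IsProbabilityMeasure
    ((1/2 : ℝ≥0∞) • Measure.dirac (((0:ℝ),(1:ℝ)), ((ε:ℝ),(1:ℝ)))
      + (1/2 : ℝ≥0∞) • Measure.dirac (((0:ℝ),(-1:ℝ)), (-ε,(-1:ℝ)))) := by
  constructor
  simp
  exact ENNReal.inv_two_add_inv_two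

lemma pi0_fst (ε : ℝ) :
    ((1/2 : ℝ≥0∞) • Measure.dirac (((0:ℝ),(1:ℝ)), ((ε:ℝ),(1:ℝ)))
      + (1/2 : ℝ≥0∞) • Measure.dirac (((0:ℝ),(-1:ℝ)), (-ε,(-1:ℝ)))).map Prod.fst
      = muMart := by
  rw [Measure.map_add _ _ measurable_fst, Measure.map_smul, Measure.map_smul,
    Measure.map_dirac' measurable_fst, Measure.map_dirac' measurable_fst]
  rfl

lemma pi0_snd (ε : ℝ) :
    ((1/2 : ℝ≥0∞) • Measure.dirac (((0:ℝ),(1:ℝ)), ((ε:ℝ),(1:ℝ)))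
      + (1/2 : ℝ≥0∞) • Measure.dirac (((0:ℝ),(-1:ℝ)), (-ε,(-1:ℝ)))).map Prod.snd
      = muEps ε := by
  rw [Measure.map_add _ _ measurable_snd, Measure.map_smul, Measure.map_smul,
    Measure.map_dirac' measurable_snd, Measure.map_dirac' measurable_snd]
  rfl

end Values

/-- (a) the only bicausal coupling between `μ` and `μ^ε` is the product
coupling `μ ⊗ μ^ε`; (b) consequently `AW_p^p(μ^ε, μ) = ε^p + 2^{p-1}`, so in particular
it exceeds `2^{p-1}`, even though the (non-adapted) `p`-Wasserstein distance between
`μ^ε` and `μ` is at most `ε` (its `p`-th power is at most `ε^p`). -/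
theorem stmt_16 (ε p : ℝ) (hε : 0 < ε) (hp : 1 ≤ p) :
    (∀ π : Measure ((ℝ × ℝ) × (ℝ × ℝ)), IsProbabilityMeasure π →
      π.map Prod.fst = muMart → π.map Prod.snd = muEps ε → IsBicausal2 π →
      π = muMart.prod (muEps ε)) ∧
    sInf {x : ℝ | ∃ π : Measure ((ℝ × ℝ) × (ℝ × ℝ)), IsProbabilityMeasure π ∧
        π.map Prod.fst = muMart ∧ π.map Prod.snd = muEps ε ∧ IsBicausal2 π ∧
        x = ∫ q : (ℝ × ℝ) × (ℝ × ℝ), (|q.1.1 - q.2.1| ^ p + |q.1.2 - q.2.2| ^ p) ∂π}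
      = ε ^ p + 2 ^ (p - 1) ∧
    (2 : ℝ) ^ (p - 1) < ε ^ p + 2 ^ (p - 1) ∧
    sInf {x : ℝ | ∃ π : Measure ((ℝ × ℝ) × (ℝ × ℝ)), IsProbabilityMeasure π ∧
        π.map Prod.fst = muMart ∧ π.map Prod.snd = muEps ε ∧
        x = ∫ q : (ℝ × ℝ) × (ℝ × ℝ), (|q.1.1 - q.2.1| ^ p + |q.1.2 - q.2.2| ^ p) ∂π}
      ≤ ε ^ p := by
  have hpart_a : ∀ π : Measure ((ℝ × ℝ) × (ℝ × ℝ)), IsProbabilityMeasure π →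
      π.map Prod.fst = muMart → π.map Prod.snd = muEps ε → IsBicausal2 π →
      π = muMart.prod (muEps ε) := by
    intro π h1 h2 h3 h4
    haveI := h1
    exact part_a ε hε π h2 h3 h4
  refine ⟨hpart_a, ?_, lt_add_of_pos_left _ (Real.rpow_pos_of_pos hε p), ?_⟩
  · have hset : {x : ℝ | ∃ π : Measure ((ℝ × ℝ) × (ℝ × ℝ)), IsProbabilityMeasure π ∧
        π.map Prod.fst = muMart ∧ π.map Prod.snd = muEps ε ∧ IsBicausal2 π ∧
        x = ∫ q : (ℝ × ℝ) × (ℝ × ℝ), (|q.1.1 - q.2.1| ^ p + |q.1.2 - q.2.2| ^ p) ∂π}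
        = {ε ^ p + 2 ^ (p - 1)} := by
      ext x
      simp only [Set.mem_setOf_eq, Set.mem_singleton_iff]
      constructor
      · rintro ⟨π, h1, h2, h3, h4, rfl⟩
        rw [hpart_a π h1 h2 h3 h4]
        exact cost_prod_value ε p hε hp
      · rintro rfl
        exact ⟨muMart.prod (muEps ε), inferInstance, (prod_marginals ε).1,
          (prod_marginals ε).2, prod_isBicausal ε, (cost_prod_value ε p hε hp).symm⟩
    rw [hset, csInf_singleton]
  · have hmem : ε ^ p ∈ {x : ℝ | ∃ π : Measure ((ℝ × ℝ) × (ℝ × ℝ)), IsProbabilityMeasure π ∧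
        π.map Prod.fst = muMart ∧ π.map Prod.snd = muEps ε ∧
        x = ∫ q : (ℝ × ℝ) × (ℝ × ℝ), (|q.1.1 - q.2.1| ^ p + |q.1.2 - q.2.2| ^ p) ∂π} :=
      ⟨(1/2 : ℝ≥0∞) • Measure.dirac (((0:ℝ),(1:ℝ)), ((ε:ℝ),(1:ℝ)))
        + (1/2 : ℝ≥0∞) • Measure.dirac (((0:ℝ),(-1:ℝ)), (-ε,(-1:ℝ))),
        pi0_prob ε, pi0_fst ε, pi0_snd ε, (cost_pi0_value ε p hε hp).symm⟩
    refine csInf_le ⟨0, fun x hx => ?_⟩ hmem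
    obtain ⟨π, h1, h2, h3, hxeq⟩ := hx
    rw [hxeq]
    exact integral_nonneg fun q => add_nonneg (Real.rpow_nonneg (abs_nonneg _) _)
      (Real.rpow_nonneg (abs_nonneg _) _)

end
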